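/- (Buekenhout–Hermand) Suppose the type set I is finite and let Γ = Γ(G, (G_i)_{i∈I}) be a coset geometry over I on which G acts flag-transitively. Then Γ is residually connected if and only if G_J = ⟨G_{J∪{i}} : i ∈ I ∖ J⟩ for every J ⊆ I with |I ∖ J| ≥ 2. -/

import Mathlib

open scoped Pointwise

namespace ChiralGeom

/-- An incidence system `(X, *, t, I)`: a set of elements `X`, a type function `t : X → I`,
and a reflexive symmetric incidence relation such that distinct elements of the same type
are never incident. -/
structure IncidenceSystem (X : Type*) (I : Type*) where
  t : X → I
  inc : X → X → Prop
  inc_refl : ∀ x, inc x x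
  inc_symm : ∀ x y, inc x y → inc y x
  eq_of_inc_of_t_eq : ∀ x y, inc x y → t x = t y → x = y

namespace IncidenceSystem

variable {X I : Type*} (Γ : IncidenceSystem X I)

/-- A flag is a set of pairwise incident elements. -/
def IsFlag (F : Set X) : Prop := ∀ x ∈ F, ∀ y ∈ F, Γ.inc x y

/-- A chamber is a flag of type `I` (containing elements of every type). -/
def IsChamber (C : Set X) : Prop := Γ.IsFlag C ∧ Γ.t '' C = Set.univ

/-- `Γ` is a geometry when every flag is contained in a chamber. -/
def IsGeometry : Prop := ∀ F : Set X, Γ.IsFlag F → ∃ C : Set X, Γ.IsChamber C ∧ F ⊆ C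

/-- The elements of the residue of a flag `F`: elements not in `F` incident to
every element of `F`. -/
def ResidueElt (F : Set X) : Type _ := {x : X // x ∉ F ∧ ∀ y ∈ F, Γ.inc x y}

/-- The residue of a flag `F`, an incidence system over `I ∖ t(F)`. -/
def residue (F : Set X) : IncidenceSystem (Γ.ResidueElt F) {i : I // i ∉ Γ.t '' F} where
  t x := ⟨Γ.t x.1, by
    rintro ⟨y, hy, hty⟩
    exact x.2.1 (by
      rw [Γ.eq_of_inc_of_t_eq x.1 y (x.2.2 y hy) hty.symm]; exact hy)⟩
  inc x y := Γ.inc x.1 y.1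
  inc_refl x := Γ.inc_refl x.1
  inc_symm x y h := Γ.inc_symm _ _ h
  eq_of_inc_of_t_eq x y h ht :=
    Subtype.ext (Γ.eq_of_inc_of_t_eq _ _ h (congrArg Subtype.val ht))

/-- `Γ` is connected when its incidence graph is connected. -/
def Connected : Prop := ∀ x y : X, Relation.ReflTransGen Γ.inc x y

/-- `Γ` is residually connected when every residue of rank at least two
(including `Γ` itself, the residue of the empty flag) is connected. -/
def ResiduallyConnected : Prop :=
  ∀ F : Set X, Γ.IsFlag F → ({i : I | i ∉ Γ.t '' F}).Nontrivial → (Γ.residue F).Connected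

/-- `Γ` is firm when every residue of rank one has at least two elements. -/
def IsFirm : Prop :=
  ∀ F : Set X, Γ.IsFlag F → (∃ i : I, {i' : I | i' ∉ Γ.t '' F} = {i}) →
    ∃ x y : Γ.ResidueElt F, x ≠ y

/-- `Γ` is thin when every residue of rank one has exactly two elements. -/
def IsThin : Prop :=
  ∀ F : Set X, Γ.IsFlag F → (∃ i : I, {i' : I | i' ∉ Γ.t '' F} = {i}) →
    ∃ x y : Γ.ResidueElt F, x ≠ y ∧ ∀ z : Γ.ResidueElt F, z = x ∨ z = y

/-- A type-preserving automorphism: a permutation of the elements preserving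
incidence and types. -/
def IsAut (e : Equiv.Perm X) : Prop :=
  (∀ x y, Γ.inc x y ↔ Γ.inc (e x) (e y)) ∧ ∀ x, Γ.t (e x) = Γ.t x

/-- Two sets of elements (e.g. chambers) in the same orbit of `Aut_I(Γ)`. -/
def SameOrbit (C C' : Set X) : Prop := ∃ e : Equiv.Perm X, Γ.IsAut e ∧ e '' C = C'

/-- Two chambers are adjacent when they differ in exactly one element. -/
def Adjacent (C C' : Set X) : Prop :=
  Γ.IsChamber C ∧ Γ.IsChamber C' ∧
    ∃ x ∈ C, ∃ y ∈ C', x ≠ y ∧ C \ {x} = C' \ {y}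

/-- `Γ` is chiral when `Aut_I(Γ)` has exactly two orbits on chambers,
and adjacent chambers always lie in distinct orbits. -/
def IsChiral : Prop :=
  (∃ C₁ C₂ : Set X, Γ.IsChamber C₁ ∧ Γ.IsChamber C₂ ∧ ¬ Γ.SameOrbit C₁ C₂ ∧
      ∀ C : Set X, Γ.IsChamber C → Γ.SameOrbit C₁ C ∨ Γ.SameOrbit C₂ C) ∧
  ∀ C C' : Set X, Γ.Adjacent C C' → ¬ Γ.SameOrbit C C'

end IncidenceSystem

section Coset

variable {G : Type*} [Group G] {ι : Type*}

/-- The elements of the coset incidence system: pairs `(i, S)` where `S` is a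
(left) coset `g Gᵢ`. -/
abbrev CosetElt (Gs : ι → Subgroup G) : Type _ :=
  {p : ι × Set G // ∃ g : G, p.2 = ({g} : Set G) * (Gs p.1 : Set G)}

lemma mem_singleton_mul_self {H : Subgroup G} (a : G) : a ∈ ({a} : Set G) * (H : Set G) :=
  ⟨a, rfl, 1, H.one_mem, mul_one a⟩

lemma singleton_mul_subgroup_eq {H : Subgroup G} {a b : G}
    (h : ((({a} : Set G) * (H : Set G)) ∩ (({b} : Set G) * (H : Set G))).Nonempty) :
    ({a} : Set G) * (H : Set G) = ({b} : Set G) * (H : Set G) := by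
  obtain ⟨x, hx1, hx2⟩ := h
  obtain ⟨a', ha', h1, hh1, hxa⟩ := Set.mem_mul.mp hx1
  obtain ⟨b', hb', h2, hh2, hxb⟩ := Set.mem_mul.mp hx2
  clear hx1 hx2
  obtain rfl : a = a' := ha'.symm
  obtain rfl : b = b' := hb'.symm
  have key : a * h1 = b * h2 := hxa.trans hxb.symm
  have e1 : b⁻¹ * (a * h1) = h2 := by rw [key, inv_mul_cancel_left]
  have e : b⁻¹ * a = h2 * h1⁻¹ := by rw [← e1]; group
  have hba : b⁻¹ * a ∈ H := e ▸ H.mul_mem hh2 (H.inv_mem hh1)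
  ext y
  simp only [Set.mem_mul, Set.mem_singleton_iff, exists_eq_left]
  constructor
  · rintro ⟨z, hz, rfl⟩
    exact ⟨(b⁻¹ * a) * z, H.mul_mem hba hz, by group⟩
  · rintro ⟨z, hz, rfl⟩
    exact ⟨(a⁻¹ * b) * z, H.mul_mem (by simpa using H.inv_mem hba) hz, by group⟩

/-- The coset incidence system `Γ(G; (Gᵢ)_{i∈ι})` : elements are the cosets `g Gᵢ`,
the type of `g Gᵢ` is `i`, and two cosets are incident iff they meet. -/
def cosetSystem (Gs : ι → Subgroup G) : IncidenceSystem (CosetElt Gs) ι where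
  t p := p.1.1
  inc p q := (p.1.2 ∩ q.1.2).Nonempty
  inc_refl p := by
    obtain ⟨g, hg⟩ := p.2
    exact ⟨g, by rw [Set.inter_self, hg]; exact mem_singleton_mul_self g⟩
  inc_symm p q h := by
    obtain ⟨x, hx1, hx2⟩ := h
    exact ⟨x, hx2, hx1⟩
  eq_of_inc_of_t_eq p q h ht := by
    obtain ⟨a, ha⟩ := p.2
    obtain ⟨b, hb⟩ := q.2
    have ht' : p.1.1 = q.1.1 := ht
    apply Subtype.ext
    apply Prod.ext ht'
    show p.1.2 = q.1.2
    have hb2 : q.1.2 = ({b} : Set G) * (Gs p.1.1 : Set G) := by rw [hb, ht']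
    rw [ha, hb2]
    apply singleton_mul_subgroup_eq
    rw [← ha, ← hb2]
    exact h

/-- The coset `g Gᵢ` as an element of the coset incidence system. -/
def mkElt (Gs : ι → Subgroup G) (i : ι) (g : G) : CosetElt Gs :=
  ⟨(i, ({g} : Set G) * (Gs i : Set G)), ⟨g, rfl⟩⟩

/-- The identity coset `Gᵢ` as an element of the coset incidence system. -/
def idElt (Gs : ι → Subgroup G) (i : ι) : CosetElt Gs :=
  ⟨(i, (Gs i : Set G)), ⟨1, by rw [Set.singleton_one, one_mul]⟩⟩

/-- The action of `g ∈ G` on the coset incidence system by multiplication. -/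
def actElt (Gs : ι → Subgroup G) (g : G) (x : CosetElt Gs) : CosetElt Gs :=
  ⟨(x.1.1, ({g} : Set G) * x.1.2), by
    obtain ⟨a, ha⟩ := x.2
    exact ⟨g * a, by rw [ha, ← mul_assoc, Set.singleton_mul_singleton]⟩⟩

/-- `G` is transitive on the set of flags of type `J` of the coset incidence system. -/
def flagTransitiveOn (Gs : ι → Subgroup G) (J : Set ι) : Prop :=
  ∀ F F' : Set (CosetElt Gs), (cosetSystem Gs).IsFlag F → (cosetSystem Gs).IsFlag F' →
    (cosetSystem Gs).t '' F = J → (cosetSystem Gs).t '' F' = J →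
    ∃ g : G, (actElt Gs g) '' F = F'

/-- The parabolic subgroup `G_J := ⋂_{j ∈ J} G_j`. -/
def interSub (Gs : ι → Subgroup G) (J : Set ι) : Subgroup G := ⨅ j ∈ J, Gs j

/-- The flag `{G_j : j ∈ J}` of identity cosets. -/
def baseFlag (Gs : ι → Subgroup G) (J : Set ι) : Set (CosetElt Gs) :=
  {x | ∃ j ∈ J, x = idElt Gs j}

/-- The family of subgroups `(G_{J ∪ {i}})_{i ∈ I ∖ J}` of `G_J`. -/
def resFamily (Gs : ι → Subgroup G) (J : Set ι) :
    {i : ι // i ∉ J} → Subgroup (interSub Gs J) :=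
  fun i => (interSub Gs (insert i.1 J)).subgroupOf (interSub Gs J)

lemma interSub_le {Gs : ι → Subgroup G} {J : Set ι} {j : ι} (hj : j ∈ J) :
    interSub Gs J ≤ Gs j := by
  intro x hx
  simp only [interSub, Subgroup.mem_iInf] at hx
  exact hx j hj

/-- The canonical homomorphism `φ_J` from the coset incidence system
`Γ(G_J, (G_{J∪{i}})_{i ∈ I∖J})` to the residue of the flag `{G_j : j ∈ J}`,
given by `φ_J (a G_{J∪{i}}) = a G_i` for `a ∈ G_J`. -/
noncomputable def phi (Gs : ι → Subgroup G) (J : Set ι)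
    (x : CosetElt (resFamily Gs J)) :
    (cosetSystem Gs).ResidueElt (baseFlag Gs J) :=
  ⟨mkElt Gs x.1.1.1 (x.2.choose : G), by
    constructor
    · rintro ⟨j, hj, hEq⟩
      have : x.1.1.1 = j := congrArg (fun y : CosetElt Gs => y.1.1) hEq
      exact x.1.1.2 (this ▸ hj)
    · rintro y ⟨j, hj, rfl⟩
      refine ⟨(x.2.choose : G), mem_singleton_mul_self _, ?_⟩
      exact interSub_le hj (x.2.choose).2⟩

end Coset

section CPlus

variable {G : Type*} [Group G]

/-- The subgroup `G⁺_J := ⟨α_i⁻¹ α_j : i, j ∈ J⟩`. -/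
def GJc (α : ℕ → G) (J : Set ℕ) : Subgroup G :=
  Subgroup.closure {g | ∃ i ∈ J, ∃ j ∈ J, g = (α i)⁻¹ * α j}

/-- `(G, {α_1, …, α_{r-1}})` is a C⁺-group: `α_0 = 1`, the `α_j` (`1 ≤ j ≤ r-1`)
generate `G`, and the intersection condition IC⁺ holds. -/
def IsCPlusGroup (r : ℕ) (α : ℕ → G) : Prop :=
  α 0 = 1 ∧
  Subgroup.closure {g | ∃ j : ℕ, 1 ≤ j ∧ j < r ∧ g = α j} = ⊤ ∧
  ∀ J K : Set ℕ, J ⊆ Set.Iio r → K ⊆ Set.Iio r → J.Nontrivial → K.Nontrivial →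
    GJc α J ⊓ GJc α K = GJc α (J ∩ K)

/-- The maximal parabolic subgroups: `G₀⁺ = ⟨α_1⁻¹ α_j : j ≥ 2⟩` and
`G_i⁺ = ⟨α_j : j ≠ i⟩` for `i ≥ 1`. -/
def maxParab (r : ℕ) (α : ℕ → G) (i : ℕ) : Subgroup G :=
  if i = 0 then Subgroup.closure {g | ∃ j : ℕ, 2 ≤ j ∧ j < r ∧ g = (α 1)⁻¹ * α j}
  else Subgroup.closure {g | ∃ j : ℕ, 1 ≤ j ∧ j < r ∧ j ≠ i ∧ g = α j}

/-- The family `(G_i⁺)_{i ∈ {0,…,r-1}}` of maximal parabolic subgroups of a C⁺-group. -/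
def cplusFamily (r : ℕ) (α : ℕ → G) : Fin r → Subgroup G := fun i => maxParab r α i.1

end CPlus


section ProofAux

variable {G : Type*} [Group G] {ι : Type*} {Gs : ι → Subgroup G}

lemma mem_singleton_mul' {A : Set G} {g a : G} : a ∈ ({g} : Set G) * A ↔ g⁻¹ * a ∈ A := by
  constructor
  · rintro ⟨x, rfl, y, hy, rfl⟩; simpa using hy
  · intro h; exact ⟨g, rfl, g⁻¹ * a, h, by group⟩

lemma coset_eq_of_mem {H : Subgroup G} {a b : G} (hb : b ∈ ({a} : Set G) * (H : Set G)) :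
    ({a} : Set G) * (H : Set G) = ({b} : Set G) * (H : Set G) :=
  singleton_mul_subgroup_eq ⟨b, hb, mem_singleton_mul_self b⟩

@[simp] lemma mkElt_type (i : ι) (a : G) : (mkElt Gs i a).1.1 = i := rfl

lemma mkElt_set (i : ι) (a : G) : (mkElt Gs i a).1.2 = ({a} : Set G) * (Gs i : Set G) := rfl

lemma mkElt_eq_of {i : ι} {a b : G} (h : a⁻¹ * b ∈ Gs i) : mkElt Gs i a = mkElt Gs i b :=
  Subtype.ext (Prod.ext rfl (coset_eq_of_mem (mem_singleton_mul'.mpr h)))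

lemma inv_mul_mem_of_mkElt_eq {i : ι} {a b : G} (h : mkElt Gs i a = mkElt Gs i b) :
    a⁻¹ * b ∈ Gs i := by
  have hs : ({a} : Set G) * (Gs i : Set G) = ({b} : Set G) * (Gs i : Set G) :=
    congrArg (fun x => x.1.2) h
  exact mem_singleton_mul'.mp (hs ▸ mem_singleton_mul_self b)

lemma exists_mkElt (x : CosetElt Gs) : ∃ g : G, x = mkElt Gs x.1.1 g := by
  obtain ⟨g, hg⟩ := x.2
  exact ⟨g, Subtype.ext (Prod.ext rfl hg)⟩

lemma idElt_eq_mkElt_one (i : ι) : idElt Gs i = mkElt Gs i 1 :=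
  Subtype.ext (Prod.ext rfl (by rw [mkElt_set, Set.singleton_one, one_mul]; rfl))

lemma actElt_mkElt (g : G) (i : ι) (a : G) :
    actElt Gs g (mkElt Gs i a) = mkElt Gs i (g * a) :=
  Subtype.ext (Prod.ext rfl (by
    show ({g} : Set G) * (({a} : Set G) * (Gs i : Set G)) = _
    rw [← mul_assoc, Set.singleton_mul_singleton]; rfl))

@[simp] lemma actElt_type (g : G) (x : CosetElt Gs) :
    (cosetSystem Gs).t (actElt Gs g x) = (cosetSystem Gs).t x := rfl

lemma actElt_actElt (g h : G) (x : CosetElt Gs) :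
    actElt Gs g (actElt Gs h x) = actElt Gs (g * h) x :=
  Subtype.ext (Prod.ext rfl (by
    show ({g} : Set G) * (({h} : Set G) * x.1.2) = ({g * h} : Set G) * x.1.2
    rw [← mul_assoc, Set.singleton_mul_singleton]))

lemma actElt_one (x : CosetElt Gs) : actElt Gs 1 x = x :=
  Subtype.ext (Prod.ext rfl (by
    show ({(1 : G)} : Set G) * x.1.2 = x.1.2
    rw [Set.singleton_one, one_mul]))

lemma actElt_inv_actElt (g : G) (x : CosetElt Gs) : actElt Gs g⁻¹ (actElt Gs g x) = x := by
  rw [actElt_actElt, inv_mul_cancel, actElt_one]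

lemma actElt_actElt_inv (g : G) (x : CosetElt Gs) : actElt Gs g (actElt Gs g⁻¹ x) = x := by
  rw [actElt_actElt, mul_inv_cancel, actElt_one]

lemma actElt_inc_iff {g : G} {x y : CosetElt Gs} :
    (cosetSystem Gs).inc (actElt Gs g x) (actElt Gs g y) ↔ (cosetSystem Gs).inc x y := by
  constructor
  · rintro ⟨w, hw1, hw2⟩
    exact ⟨g⁻¹ * w, mem_singleton_mul'.mp (hw1 : w ∈ ({g} : Set G) * x.1.2),
      mem_singleton_mul'.mp (hw2 : w ∈ ({g} : Set G) * y.1.2)⟩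
  · rintro ⟨w, hw1, hw2⟩
    refine ⟨g * w, ?_, ?_⟩
    · exact (mem_singleton_mul'.mpr (by simpa using hw1) : g * w ∈ ({g} : Set G) * x.1.2)
    · exact (mem_singleton_mul'.mpr (by simpa using hw2) : g * w ∈ ({g} : Set G) * y.1.2)

lemma inc_of_common {x y : CosetElt Gs} {w : G} (hx : w ∈ x.1.2) (hy : w ∈ y.1.2) :
    (cosetSystem Gs).inc x y := ⟨w, hx, hy⟩

@[simp] lemma t_idElt (i : ι) : (cosetSystem Gs).t (idElt Gs i) = i := rfl

lemma idElt_mem_set (i : ι) {w : G} (hw : w ∈ Gs i) : w ∈ (idElt Gs i).1.2 := hw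

lemma mem_interSub {J : Set ι} {a : G} :
    a ∈ interSub Gs J ↔ ∀ j ∈ J, a ∈ Gs j := by
  simp [interSub, Subgroup.mem_iInf]

lemma interSub_mono {J K : Set ι} (h : J ⊆ K) : interSub Gs K ≤ interSub Gs J :=
  fun _ hx => mem_interSub.mpr fun j hj => mem_interSub.mp hx j (h hj)

lemma baseFlag_isFlag (J : Set ι) : (cosetSystem Gs).IsFlag (baseFlag Gs J) := by
  rintro x ⟨j, hj, rfl⟩ y ⟨j', hj', rfl⟩
  exact inc_of_common (idElt_mem_set j (Gs j).one_mem) (idElt_mem_set j' (Gs j').one_mem)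

lemma t_image_baseFlag (J : Set ι) : (cosetSystem Gs).t '' baseFlag Gs J = J := by
  ext l
  constructor
  · rintro ⟨x, ⟨j, hj, rfl⟩, rfl⟩; exact hj
  · intro hl; exact ⟨idElt Gs l, ⟨l, hl, rfl⟩, rfl⟩

lemma isFlag_insert {X I : Type*} {Γ : IncidenceSystem X I} {F : Set X} {x : X}
    (hF : Γ.IsFlag F) (hx : ∀ y ∈ F, Γ.inc x y) : Γ.IsFlag (insert x F) := by
  intro u hu v hv
  rcases hu with rfl | hu
  · rcases hv with rfl | hv
    · exact Γ.inc_refl _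
    · exact hx v hv
  · rcases hv with rfl | hv
    · exact Γ.inc_symm _ _ (hx u hu)
    · exact hF u hu v hv

/-- Flag transitivity on flags of arbitrary type, from chamber transitivity. -/
lemma ftAll (hgeo : (cosetSystem Gs).IsGeometry) (hft : flagTransitiveOn Gs Set.univ)
    {F F' : Set (CosetElt Gs)} (hF : (cosetSystem Gs).IsFlag F)
    (hF' : (cosetSystem Gs).IsFlag F')
    (hFF' : (cosetSystem Gs).t '' F = (cosetSystem Gs).t '' F') :
    ∃ g : G, actElt Gs g '' F = F' := by
  obtain ⟨C, hC, hFC⟩ := hgeo F hF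
  obtain ⟨C', hC', hF'C'⟩ := hgeo F' hF'
  obtain ⟨g, hg⟩ := hft C C' hC.1 hC'.1 hC.2 hC'.2
  refine ⟨g, Set.Subset.antisymm ?_ ?_⟩
  · rintro _ ⟨y, hyF, rfl⟩
    have hyC' : actElt Gs g y ∈ C' := hg ▸ Set.mem_image_of_mem _ (hFC hyF)
    have hty : (cosetSystem Gs).t (actElt Gs g y) ∈ (cosetSystem Gs).t '' F' := by
      rw [← hFF']; exact ⟨y, hyF, rfl⟩
    obtain ⟨z, hzF', htz⟩ := hty
    have hzC' : z ∈ C' := hF'C' hzF'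
    have : actElt Gs g y = z :=
      (cosetSystem Gs).eq_of_inc_of_t_eq _ _ (hC'.1 _ hyC' _ hzC') htz.symm
    rwa [this]
  · intro y hyF'
    have hyC' : y ∈ C' := hF'C' hyF'
    rw [← hg] at hyC'
    obtain ⟨x, hxC, rfl⟩ := hyC'
    have htx : (cosetSystem Gs).t x ∈ (cosetSystem Gs).t '' F := by
      rw [hFF']
      exact ⟨actElt Gs g x, hyF', rfl⟩
    obtain ⟨x', hx'F, htx'⟩ := htx
    have : x' = x :=
      (cosetSystem Gs).eq_of_inc_of_t_eq _ _ (hC.1 _ (hFC hx'F) _ hxC) htx'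
    exact ⟨x', hx'F, by rw [this]⟩

/-- The residue element `a G_i` of the base flag of type `J`, for `a ∈ G_J`, `i ∉ J`. -/
def relt (Gs : ι → Subgroup G) (J : Set ι) {i : ι} (hi : i ∉ J) {a : G}
    (ha : a ∈ interSub Gs J) : (cosetSystem Gs).ResidueElt (baseFlag Gs J) :=
  ⟨mkElt Gs i a, by
    constructor
    · rintro ⟨j, hj, hEq⟩
      exact hi (by rw [show i = j from congrArg (fun z : CosetElt Gs => z.1.1) hEq]; exact hj)
    · rintro y ⟨j, hj, rfl⟩
      exact inc_of_common (mem_singleton_mul_self a)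
        (idElt_mem_set j (mem_interSub.mp ha j hj))⟩

@[simp] lemma relt_coe (J : Set ι) {i : ι} (hi : i ∉ J) {a : G} (ha : a ∈ interSub Gs J) :
    (relt Gs J hi ha).1 = mkElt Gs i a := rfl

/-- Every element of the residue of the base flag is a coset `a G_i` with `a ∈ G_J`. -/
lemma residueRepr (hgeo : (cosetSystem Gs).IsGeometry) (hft : flagTransitiveOn Gs Set.univ)
    {J : Set ι} (x : (cosetSystem Gs).ResidueElt (baseFlag Gs J)) :
    ∃ i : ι, ∃ hi : i ∉ J, ∃ a : G, ∃ ha : a ∈ interSub Gs J, x.1 = mkElt Gs i a := by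
  set i := x.1.1.1 with hidef
  obtain ⟨a, hax⟩ := exists_mkElt x.1
  have hi : i ∉ J := by
    intro hiJ
    have hinc : (cosetSystem Gs).inc x.1 (idElt Gs i) := x.2.2 _ ⟨i, hiJ, rfl⟩
    exact x.2.1 (by
      rw [(cosetSystem Gs).eq_of_inc_of_t_eq _ _ hinc rfl]
      exact ⟨i, hiJ, rfl⟩)
  -- two flags of type `insert i J`
  have hFlag1 : (cosetSystem Gs).IsFlag (insert (mkElt Gs i a) (baseFlag Gs J)) := by
    refine isFlag_insert (baseFlag_isFlag J) ?_
    intro y hy; rw [← hax]; exact x.2.2 y hy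
  have hFlag2 : (cosetSystem Gs).IsFlag (insert (idElt Gs i) (baseFlag Gs J)) := by
    refine isFlag_insert (baseFlag_isFlag J) ?_
    rintro y ⟨j, hj, rfl⟩
    exact inc_of_common (idElt_mem_set i (Gs i).one_mem) (idElt_mem_set j (Gs j).one_mem)
  obtain ⟨g, hg⟩ := ftAll hgeo hft hFlag2 hFlag1 (by
    rw [Set.image_insert_eq, Set.image_insert_eq, t_image_baseFlag]; rfl)
  have hgJ : g ∈ interSub Gs J := by
    refine mem_interSub.mpr fun j hj => ?_
    have hmem : actElt Gs g (idElt Gs j) ∈ insert (mkElt Gs i a) (baseFlag Gs J) := by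
      rw [← hg]; exact Set.mem_image_of_mem _ (Set.mem_insert_of_mem _ ⟨j, hj, rfl⟩)
    rw [idElt_eq_mkElt_one j, actElt_mkElt, mul_one] at hmem
    rcases hmem with hmem | ⟨j', hj', hmem⟩
    · have hty : j = i := congrArg (fun z : CosetElt Gs => z.1.1) hmem
      exact absurd (by rw [← hty]; exact hj : i ∈ J) hi
    · have hty : j = j' := congrArg (fun z : CosetElt Gs => z.1.1) hmem
      subst hty
      rw [idElt_eq_mkElt_one j] at hmem
      simpa using (Gs j).inv_mem (inv_mul_mem_of_mkElt_eq hmem)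
  have hmem : actElt Gs g (idElt Gs i) ∈ insert (mkElt Gs i a) (baseFlag Gs J) := by
    rw [← hg]; exact Set.mem_image_of_mem _ (Set.mem_insert _ _)
  rw [idElt_eq_mkElt_one i, actElt_mkElt, mul_one] at hmem
  rcases hmem with hmem | ⟨j', hj', hmem⟩
  · exact ⟨i, hi, g, hgJ, by rw [hax, hmem.symm]⟩
  · have hty : i = j' := congrArg (fun z : CosetElt Gs => z.1.1) hmem
    exact absurd (by rw [hty]; exact hj' : i ∈ J) hi

/-- Key lemma: if `c ∈ G_J` and `c G_k` meets `G_i` (`i, k ∉ J`), then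
`c ∈ ⟨G_{J∪{i}}, G_{J∪{k}}⟩`. -/
lemma key_mem_sup (hgeo : (cosetSystem Gs).IsGeometry) (hft : flagTransitiveOn Gs Set.univ)
    {J : Set ι} {i k : ι} {c : G} (hi : i ∉ J) (hk : k ∉ J) (hc : c ∈ interSub Gs J)
    (h : ((({c} : Set G) * (Gs k : Set G)) ∩ (Gs i : Set G)).Nonempty) :
    c ∈ ⨆ l ∈ {l : ι | l ∉ J}, interSub Gs (insert l J) := by
  obtain ⟨w, hw1, hw2⟩ := h
  by_cases hik : i = k
  · subst hik
    have hck : c ∈ Gs i := by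
      have h1 : c⁻¹ * w ∈ Gs i := mem_singleton_mul'.mp hw1
      have : c = w * (c⁻¹ * w)⁻¹ := by group
      rw [this]; exact (Gs i).mul_mem hw2 ((Gs i).inv_mem h1)
    refine le_iSup₂ (f := fun l (_ : l ∈ {l : ι | l ∉ J}) => interSub Gs (insert l J)) i hi ?_
    exact mem_interSub.mpr fun j hj => by
      rcases hj with rfl | hj
      · exact hck
      · exact mem_interSub.mp hc j hj
  · -- use flag transitivity on flags of type J ∪ {i, k}
    have hFlag1 : (cosetSystem Gs).IsFlag
        (insert (idElt Gs i) (insert (mkElt Gs k c) (baseFlag Gs J))) := by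
      refine isFlag_insert (isFlag_insert (baseFlag_isFlag J) ?_) ?_
      · rintro y ⟨j, hj, rfl⟩
        exact inc_of_common (mem_singleton_mul_self c)
          (idElt_mem_set j (mem_interSub.mp hc j hj))
      · rintro y (rfl | ⟨j, hj, rfl⟩)
        · exact inc_of_common (w := w) hw2 hw1
        · exact inc_of_common (idElt_mem_set i (Gs i).one_mem)
            (idElt_mem_set j (Gs j).one_mem)
    have hFlag2 : (cosetSystem Gs).IsFlag
        (insert (idElt Gs i) (insert (idElt Gs k) (baseFlag Gs J))) := by
      refine isFlag_insert (isFlag_insert (baseFlag_isFlag J) ?_) ?_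
      · rintro y ⟨j, hj, rfl⟩
        exact inc_of_common (idElt_mem_set k (Gs k).one_mem)
          (idElt_mem_set j (Gs j).one_mem)
      · rintro y (rfl | ⟨j, hj, rfl⟩)
        · exact inc_of_common (idElt_mem_set i (Gs i).one_mem)
            (idElt_mem_set k (Gs k).one_mem)
        · exact inc_of_common (idElt_mem_set i (Gs i).one_mem)
            (idElt_mem_set j (Gs j).one_mem)
    obtain ⟨g, hg⟩ := ftAll hgeo hft hFlag2 hFlag1 (by
      rw [Set.image_insert_eq, Set.image_insert_eq, Set.image_insert_eq,
        Set.image_insert_eq, t_image_baseFlag]; rfl)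
    have hmemOf : ∀ x ∈ insert (idElt Gs i) (insert (idElt Gs k) (baseFlag Gs J)),
        actElt Gs g x ∈ insert (idElt Gs i) (insert (mkElt Gs k c) (baseFlag Gs J)) := by
      intro x hx; rw [← hg]; exact Set.mem_image_of_mem _ hx
    -- g ∈ G_{J ∪ {i}}
    have hgJ : ∀ j ∈ J, g ∈ Gs j := by
      intro j hj
      have hmem := hmemOf (idElt Gs j)
        (Set.mem_insert_of_mem _ (Set.mem_insert_of_mem _ ⟨j, hj, rfl⟩))
      rw [idElt_eq_mkElt_one j, actElt_mkElt, mul_one] at hmem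
      rcases hmem with hmem | hmem | ⟨j', hj', hmem⟩
      · have hty : j = i := congrArg (fun z : CosetElt Gs => z.1.1) hmem
        exact absurd (by rw [← hty]; exact hj : i ∈ J) hi
      · have hty : j = k := congrArg (fun z : CosetElt Gs => z.1.1) hmem
        exact absurd (by rw [← hty]; exact hj : k ∈ J) hk
      · have hty : j = j' := congrArg (fun z : CosetElt Gs => z.1.1) hmem
        subst hty
        rw [idElt_eq_mkElt_one j] at hmem
        simpa using (Gs j).inv_mem (inv_mul_mem_of_mkElt_eq hmem)
    have hgi : g ∈ Gs i := by
      have hmem := hmemOf (idElt Gs i) (Set.mem_insert _ _)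
      rw [idElt_eq_mkElt_one i, actElt_mkElt, mul_one] at hmem
      rcases hmem with hmem | hmem | ⟨j', hj', hmem⟩
      · simpa using (Gs i).inv_mem (inv_mul_mem_of_mkElt_eq hmem)
      · have hty : i = k := congrArg (fun z : CosetElt Gs => z.1.1) hmem
        exact absurd hty hik
      · have hty : i = j' := congrArg (fun z : CosetElt Gs => z.1.1) hmem
        exact absurd (by rw [hty]; exact hj' : i ∈ J) hi
    have hgc : g⁻¹ * c ∈ Gs k := by
      have hmem := hmemOf (idElt Gs k)
        (Set.mem_insert_of_mem _ (Set.mem_insert _ _))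
      rw [idElt_eq_mkElt_one k, actElt_mkElt, mul_one] at hmem
      rcases hmem with hmem | hmem | ⟨j', hj', hmem⟩
      · have hty : k = i := congrArg (fun z : CosetElt Gs => z.1.1) hmem
        exact absurd hty.symm hik
      · exact inv_mul_mem_of_mkElt_eq hmem
      · have hty : k = j' := congrArg (fun z : CosetElt Gs => z.1.1) hmem
        exact absurd (by rw [hty]; exact hj' : k ∈ J) hk
    have h1 : g ∈ interSub Gs (insert i J) := mem_interSub.mpr fun j hj => by
      rcases hj with rfl | hj
      · exact hgi
      · exact hgJ j hj
    have h2 : g⁻¹ * c ∈ interSub Gs (insert k J) := mem_interSub.mpr fun j hj => by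
      rcases hj with rfl | hj
      · exact hgc
      · exact (Gs j).mul_mem ((Gs j).inv_mem (hgJ j hj)) (mem_interSub.mp hc j hj)
    have : c = g * (g⁻¹ * c) := by group
    rw [this]
    exact Subgroup.mul_mem _
      (le_iSup₂ (f := fun l (_ : l ∈ {l : ι | l ∉ J}) => interSub Gs (insert l J)) i hi h1)
      (le_iSup₂ (f := fun l (_ : l ∈ {l : ι | l ∉ J}) => interSub Gs (insert l J)) k hk h2)

lemma actElt_idElt_of_mem {c : G} {j : ι} (hc : c ∈ Gs j) :
    actElt Gs c (idElt Gs j) = idElt Gs j := by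
  rw [idElt_eq_mkElt_one, actElt_mkElt, mul_one]
  exact mkElt_eq_of (show c⁻¹ * 1 ∈ Gs j by simpa using (Gs j).inv_mem hc)

/-- Left multiplication by an element of `G_J` acts on the residue of the base flag. -/
def resAct {J : Set ι} {c : G} (hc : c ∈ interSub Gs J)
    (x : (cosetSystem Gs).ResidueElt (baseFlag Gs J)) :
    (cosetSystem Gs).ResidueElt (baseFlag Gs J) :=
  ⟨actElt Gs c x.1, by
    constructor
    · rintro ⟨j, hj, hEq⟩
      refine x.2.1 ⟨j, hj, ?_⟩
      have := congrArg (actElt Gs c⁻¹) hEq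
      rw [actElt_inv_actElt] at this
      rw [this, actElt_idElt_of_mem ((Gs j).inv_mem (mem_interSub.mp hc j hj))]
    · rintro y ⟨j, hj, rfl⟩
      have := actElt_inc_iff (Gs := Gs) (g := c) (x := x.1) (y := idElt Gs j) |>.mpr
        (x.2.2 _ ⟨j, hj, rfl⟩)
      rwa [actElt_idElt_of_mem (mem_interSub.mp hc j hj)] at this⟩

lemma resAct_relt {J : Set ι} {c : G} (hc : c ∈ interSub Gs J) {i : ι} (hi : i ∉ J)
    {a : G} (ha : a ∈ interSub Gs J) :
    resAct hc (relt Gs J hi ha) = relt Gs J hi (Subgroup.mul_mem _ hc ha) :=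
  Subtype.ext (actElt_mkElt c i a)

lemma resAct_path {J : Set ι} {c : G} (hc : c ∈ interSub Gs J)
    {u v : (cosetSystem Gs).ResidueElt (baseFlag Gs J)}
    (h : Relation.ReflTransGen ((cosetSystem Gs).residue (baseFlag Gs J)).inc u v) :
    Relation.ReflTransGen ((cosetSystem Gs).residue (baseFlag Gs J)).inc
      (resAct hc u) (resAct hc v) :=
  Relation.ReflTransGen.lift (p := ((cosetSystem Gs).residue (baseFlag Gs J)).inc) (resAct hc)
    (fun _ _ hab => actElt_inc_iff.mpr hab) _ _ h

lemma residue_inc_symm {J : Set ι} :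
    Symmetric ((cosetSystem Gs).residue (baseFlag Gs J)).inc :=
  fun _ _ h => (cosetSystem Gs).inc_symm _ _ h

/-- Connectivity of residues transports along the action of `G`. -/
lemma residue_transport {F F' : Set (CosetElt Gs)} {g : G} (hg : actElt Gs g '' F = F')
    (hconn : ∀ u v : (cosetSystem Gs).ResidueElt F,
      Relation.ReflTransGen ((cosetSystem Gs).residue F).inc u v) :
    ∀ u v : (cosetSystem Gs).ResidueElt F',
      Relation.ReflTransGen ((cosetSystem Gs).residue F').inc u v := by
  have hmem : ∀ x : CosetElt Gs, x ∈ F → actElt Gs g x ∈ F' := fun x hx =>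
    hg ▸ Set.mem_image_of_mem _ hx
  have hmem' : ∀ x : CosetElt Gs, x ∈ F' → actElt Gs g⁻¹ x ∈ F := by
    intro x hx
    rw [← hg] at hx
    obtain ⟨y, hy, rfl⟩ := hx
    rwa [actElt_inv_actElt]
  let π : (cosetSystem Gs).ResidueElt F → (cosetSystem Gs).ResidueElt F' := fun u =>
    ⟨actElt Gs g u.1, by
      constructor
      · intro hmemF'
        have h1 := hmem' _ hmemF'
        rw [actElt_inv_actElt] at h1
        exact u.2.1 h1
      · intro y hy
        have h1 := u.2.2 _ (hmem' y hy)
        have h2 := (actElt_inc_iff (g := g)).mpr h1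
        rwa [actElt_actElt_inv] at h2⟩
  have hsurj : ∀ u : (cosetSystem Gs).ResidueElt F', ∃ u', π u' = u := by
    intro u
    refine ⟨⟨actElt Gs g⁻¹ u.1, ?_, ?_⟩, Subtype.ext (actElt_actElt_inv g u.1)⟩
    · intro hmemF
      have h1 := hmem _ hmemF
      rw [actElt_actElt_inv] at h1
      exact u.2.1 h1
    · intro y hy
      have h1 := u.2.2 _ (hmem y hy)
      have h2 := (actElt_inc_iff (g := g⁻¹)).mpr h1
      rwa [actElt_inv_actElt] at h2
  intro u v
  obtain ⟨u', rfl⟩ := hsurj u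
  obtain ⟨v', rfl⟩ := hsurj v
  exact Relation.ReflTransGen.lift (p := ((cosetSystem Gs).residue F').inc) π (fun a b hab => actElt_inc_iff.mpr hab) _ _ (hconn u' v')

/-- Connectivity of the residue of the base flag, given the generation condition. -/
lemma baseResidue_connected (hgeo : (cosetSystem Gs).IsGeometry)
    (hft : flagTransitiveOn Gs Set.univ) {J : Set ι}
    (hgen : interSub Gs J = ⨆ l ∈ {l : ι | l ∉ J}, interSub Gs (insert l J)) :
    ∀ u v : (cosetSystem Gs).ResidueElt (baseFlag Gs J),
      Relation.ReflTransGen ((cosetSystem Gs).residue (baseFlag Gs J)).inc u v := by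
  set U : Set G := ⋃ l ∈ {l : ι | l ∉ J}, ((interSub Gs (insert l J) : Subgroup G) : Set G)
    with hU
  have hle : (⨆ l ∈ {l : ι | l ∉ J}, interSub Gs (insert l J)) ≤ Subgroup.closure U :=
    iSup₂_le fun l hl x hx => Subgroup.subset_closure (Set.mem_biUnion hl hx)
  have key : ∀ (a : G), a ∈ Subgroup.closure U →
      a ∈ interSub Gs J ∧ ∀ (i : ι) (hi : i ∉ J) (ha' : a ∈ interSub Gs J),
        Relation.ReflTransGen ((cosetSystem Gs).residue (baseFlag Gs J)).inc
          (relt Gs J hi ha') (relt Gs J hi (one_mem _)) := by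
    intro a ha
    induction ha using Subgroup.closure_induction with
    | mem x hx =>
      obtain ⟨k, hk, hxk⟩ := Set.mem_iUnion₂.mp hx
      have hxk' : x ∈ interSub Gs (insert k J) := hxk
      refine ⟨interSub_mono (Set.subset_insert k J) hxk', ?_⟩
      intro i hi ha'
      have s1 : ((cosetSystem Gs).residue (baseFlag Gs J)).inc
          (relt Gs J hi ha') (relt Gs J hk (one_mem _)) :=
        inc_of_common (mem_singleton_mul_self x)
          (show x ∈ ({(1 : G)} : Set G) * (Gs k : Set G) from
            mem_singleton_mul'.mpr (by
              simpa using mem_interSub.mp hxk' k (Set.mem_insert k J)))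
      have s2 : ((cosetSystem Gs).residue (baseFlag Gs J)).inc
          (relt Gs J hk (one_mem _)) (relt Gs J hi (one_mem _)) :=
        inc_of_common (mem_singleton_mul_self (1 : G)) (mem_singleton_mul_self (1 : G))
      exact (Relation.ReflTransGen.single s1).trans (Relation.ReflTransGen.single s2)
    | one => exact ⟨one_mem _, fun i hi ha' => Relation.ReflTransGen.refl⟩
    | mul x y hx hy ihx ihy =>
      refine ⟨Subgroup.mul_mem _ ihx.1 ihy.1, ?_⟩
      intro i hi ha'
      have p1 := ihy.2 i hi ihy.1
      have p2 := resAct_path ihx.1 p1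
      rw [resAct_relt, resAct_relt] at p2
      have e2 : relt Gs J hi (Subgroup.mul_mem _ ihx.1 (one_mem _)) =
          relt Gs J hi ihx.1 :=
        Subtype.ext (show mkElt Gs i (x * 1) = mkElt Gs i x by rw [mul_one])
      rw [e2] at p2
      exact p2.trans (ihx.2 i hi ihx.1)
    | inv x hx ih =>
      refine ⟨Subgroup.inv_mem _ ih.1, ?_⟩
      intro i hi ha'
      have p1 := ih.2 i hi ih.1
      have p2 := resAct_path (Subgroup.inv_mem _ ih.1) p1
      rw [resAct_relt, resAct_relt] at p2
      have e1 : relt Gs J hi (Subgroup.mul_mem _ (Subgroup.inv_mem _ ih.1) ih.1) =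
          relt Gs J hi (one_mem _) :=
        Subtype.ext (show mkElt Gs i (x⁻¹ * x) = mkElt Gs i 1 by rw [inv_mul_cancel])
      have e2 : relt Gs J hi (Subgroup.mul_mem _ (Subgroup.inv_mem _ ih.1) (one_mem _)) =
          relt Gs J hi (Subgroup.inv_mem _ ih.1) :=
        Subtype.ext (show mkElt Gs i (x⁻¹ * 1) = mkElt Gs i x⁻¹ by rw [mul_one])
      rw [e1, e2] at p2
      exact @Std.Symm.symm _ _ (@Relation.ReflTransGen.stdSymm _ _ ⟨fun _ _ h => residue_inc_symm h⟩) _ _ p2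
  intro u v
  obtain ⟨i, hi, a, haJ, hu⟩ := residueRepr hgeo hft u
  obtain ⟨k, hk, b, hbJ, hv⟩ := residueRepr hgeo hft v
  have hu' : u = relt Gs J hi haJ := Subtype.ext hu
  have hv' : v = relt Gs J hk hbJ := Subtype.ext hv
  rw [hu', hv']
  have haC : a ∈ Subgroup.closure U := hle (by rw [← hgen]; exact haJ)
  have hbC : b ∈ Subgroup.closure U := hle (by rw [← hgen]; exact hbJ)
  have pa := (key a haC).2 i hi haJ
  have pb := (key b hbC).2 k hk hbJ
  have mid : ((cosetSystem Gs).residue (baseFlag Gs J)).inc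
      (relt Gs J hi (one_mem _)) (relt Gs J hk (one_mem _)) :=
    inc_of_common (mem_singleton_mul_self (1 : G)) (mem_singleton_mul_self (1 : G))
  exact pa.trans ((Relation.ReflTransGen.single mid).trans
    (@Std.Symm.symm _ _ (@Relation.ReflTransGen.stdSymm _ _ ⟨fun _ _ h => residue_inc_symm h⟩) _ _ pb))

end ProofAux

/-- (Buekenhout–Hermand) A flag-transitive coset geometry over a
finite type set is residually connected iff `G_J = ⟨G_{J∪{i}} : i ∈ I ∖ J⟩` for every
`J ⊆ I` with `|I ∖ J| ≥ 2`. -/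
theorem buekenhout_hermand_residuallyConnected_iff
    {G ι : Type*} [Group G] [Finite ι] (Gs : ι → Subgroup G)
    (hgeo : (cosetSystem Gs).IsGeometry)
    (hft : flagTransitiveOn Gs Set.univ) :
    (cosetSystem Gs).ResiduallyConnected ↔
      ∀ J : Set ι, ({i : ι | i ∉ J}).Nontrivial →
        interSub Gs J = ⨆ i ∈ {i : ι | i ∉ J}, interSub Gs (insert i J) := by
  constructor
  · -- residual connectedness implies the generation condition
    intro rc J hJ
    refine le_antisymm ?_ (iSup₂_le fun i _ => interSub_mono (Set.subset_insert i J))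
    intro g hg
    obtain ⟨i0, hi0⟩ := hJ.nonempty
    have hi0' : i0 ∉ J := hi0
    have hconn : ((cosetSystem Gs).residue (baseFlag Gs J)).Connected := by
      apply rc _ (baseFlag_isFlag J)
      simp only [t_image_baseFlag]
      exact hJ
    have main : ∀ y : (cosetSystem Gs).ResidueElt (baseFlag Gs J),
        Relation.ReflTransGen ((cosetSystem Gs).residue (baseFlag Gs J)).inc
          (relt Gs J hi0' (one_mem _)) y →
        ∃ i, ∃ _ : i ∉ J, ∃ a,
          a ∈ (⨆ l ∈ {l : ι | l ∉ J}, interSub Gs (insert l J)) ∧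
          a ∈ interSub Gs J ∧ y.1 = mkElt Gs i a := by
      intro y hy
      induction hy with
      | refl => exact ⟨i0, hi0', 1, one_mem _, one_mem _, rfl⟩
      | @tail b c hp hstep ih =>
        obtain ⟨i, hi, a, haS, haJ, hb⟩ := ih
        obtain ⟨k, hk, b', hb'J, hcEq⟩ := residueRepr hgeo hft c
        have hne0 : ((b.1.1.2) ∩ (c.1.1.2)).Nonempty := hstep
        rw [hb, hcEq] at hne0
        obtain ⟨w, hw1, hw2⟩ := hne0
        have hw1' : a⁻¹ * w ∈ Gs i :=
          mem_singleton_mul'.mp (hw1 : w ∈ ({a} : Set G) * (Gs i : Set G))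
        have hw2' : b'⁻¹ * w ∈ Gs k :=
          mem_singleton_mul'.mp (hw2 : w ∈ ({b'} : Set G) * (Gs k : Set G))
        have hcJ : a⁻¹ * b' ∈ interSub Gs J :=
          Subgroup.mul_mem _ (Subgroup.inv_mem _ haJ) hb'J
        have hne : ((({a⁻¹ * b'} : Set G) * (Gs k : Set G)) ∩ (Gs i : Set G)).Nonempty := by
          refine ⟨a⁻¹ * w, mem_singleton_mul'.mpr ?_, hw1'⟩
          have hq : (a⁻¹ * b')⁻¹ * (a⁻¹ * w) = b'⁻¹ * w := by group
          rw [hq]; exact hw2'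
        have hcS := key_mem_sup hgeo hft hi hk hcJ hne
        refine ⟨k, hk, b', ?_, hb'J, hcEq⟩
        have hq : b' = a * (a⁻¹ * b') := by group
        rw [hq]
        exact Subgroup.mul_mem _ haS hcS
    obtain ⟨i1, hi1, a, haS, haJ, hx1⟩ :=
      main (relt Gs J hi0' hg) (hconn (relt Gs J hi0' (one_mem _)) (relt Gs J hi0' hg))
    have hEq : mkElt Gs i0 a = mkElt Gs i0 g := by
      have hty : i0 = i1 := congrArg (fun z : CosetElt Gs => z.1.1) (hx1 : _)
      subst hty
      exact hx1.symm
    have hmem : a⁻¹ * g ∈ Gs i0 := inv_mul_mem_of_mkElt_eq hEq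
    have h2 : a⁻¹ * g ∈ interSub Gs (insert i0 J) := mem_interSub.mpr fun j hj => by
      rcases hj with rfl | hj
      · exact hmem
      · exact (Gs j).mul_mem ((Gs j).inv_mem (mem_interSub.mp haJ j hj))
          (mem_interSub.mp hg j hj)
    have hq : g = a * (a⁻¹ * g) := by group
    rw [hq]
    exact Subgroup.mul_mem _ haS
      (le_iSup₂ (f := fun l (_ : l ∈ {l : ι | l ∉ J}) => interSub Gs (insert l J)) i0 hi0' h2)
  · -- the generation condition implies residual connectedness
    intro hgen F hF hnt
    obtain ⟨g, hg⟩ := ftAll hgeo hft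
      (baseFlag_isFlag ((cosetSystem Gs).t '' F)) hF (t_image_baseFlag _)
    exact residue_transport hg
      (baseResidue_connected hgeo hft (hgen ((cosetSystem Gs).t '' F) hnt))

end ChiralGeom
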